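/- arXiv:2203.17050 — 4 statements merged into one kernel-verified Lean document; each statement's English description precedes it below -/
import Mathlib

section
/- Let E : [0,∞) → [0,∞) be non-increasing and suppose there exists T > 0 such that ∫_t^∞ E(s) ds ≤ T·E(t) for all t ≥ 0. Then E(t) ≤ E(0)·e^{1 - t/T} for all t ≥ T. -/
open MeasureTheory Set Real Filter Topology

theorem komornik_thm_8_1 (E : ℝ → ℝ)
    (hE_nonneg : ∀ t ≥ 0, 0 ≤ E t)
    (hE_mono : ∀ s t : ℝ, 0 ≤ s → s ≤ t → E t ≤ E s)
    (hE_int : ∀ t ≥ 0, MeasureTheory.IntegrableOn E (Set.Ioi t))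
    (T : ℝ) (hT : 0 < T)
    (h : ∀ t ≥ 0, (∫ s in Set.Ioi t, E s) ≤ T * E t) :
    ∀ t ≥ T, E t ≤ E 0 * Real.exp (1 - t / T) := by
  set F : ℝ → ℝ := fun t => ∫ s in Set.Ioi t, E s with hF
  have hFnonneg : ∀ t, 0 ≤ t → 0 ≤ F t := by
    intro t ht
    apply setIntegral_nonneg measurableSet_Ioi
    intro x hx
    exact hE_nonneg x (le_trans ht (le_of_lt hx))
  have hchunk : ∀ a b : ℝ, 0 ≤ a → a ≤ b →
      F a = (∫ s in Ioc a b, E s) + F b := by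
    intro a b ha hab
    have h1 : IntegrableOn E (Ioc a b) := (hE_int a ha).mono_set Ioc_subset_Ioi_self
    have h2 : IntegrableOn E (Ioi b) := hE_int b (le_trans ha hab)
    have hd : Disjoint (Ioc a b) (Ioi b) := by
      apply Set.disjoint_left.2
      intro x hx hx'
      exact absurd hx.2 (not_le.2 hx')
    have := setIntegral_union hd measurableSet_Ioi h1 h2 (f := E) (μ := volume)
    rw [Ioc_union_Ioi_eq_Ioi hab] at this
    exact this
  have hlow : ∀ a b : ℝ, 0 ≤ a → a ≤ b → (b - a) * E b ≤ ∫ s in Ioc a b, E s := by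
    intro a b ha hab
    have h1 : IntegrableOn E (Ioc a b) := (hE_int a ha).mono_set Ioc_subset_Ioi_self
    have h2 : IntegrableOn (fun _ => E b) (Ioc a b) := integrableOn_const (by
      rw [Real.volume_Ioc]; exact ENNReal.ofReal_ne_top)
    have := setIntegral_mono_on h2 h1 measurableSet_Ioc
      (fun x hx => hE_mono x b (le_trans ha (le_of_lt hx.1)) hx.2)
    rwa [setIntegral_const, measureReal_def, Real.volume_Ioc, ENNReal.toReal_ofReal (by linarith),
      smul_eq_mul] at this
  have hstep : ∀ t s : ℝ, 0 ≤ t → 0 ≤ s → F (t + s) * (1 + s / T) ≤ F t := by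
    intro t s ht hs
    have hts : 0 ≤ t + s := by linarith
    have h1 := hchunk t (t + s) ht (by linarith)
    have h2 := hlow t (t + s) ht (by linarith)
    have h3 := h (t + s) hts
    have h4 : F (t + s) ≤ T * E (t + s) := h3
    have h5 : F (t + s) + s * E (t + s) ≤ F t := by
      rw [h1]; have : t + s - t = s := by ring
      rw [this] at h2; linarith
    have h6 : F (t + s) * (s / T) ≤ s * E (t + s) := by
      have hd : F (t + s) / T ≤ E (t + s) := (div_le_iff₀ hT).2 (by linarith)
      calc F (t + s) * (s / T) = s * (F (t + s) / T) := by ring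
        _ ≤ s * E (t + s) := mul_le_mul_of_nonneg_left hd hs
    nlinarith [h5, h6]
  have hiter : ∀ s : ℝ, 0 ≤ s → ∀ k : ℕ, F (k * s) * (1 + s / T) ^ k ≤ F 0 := by
    intro s hs k
    induction k with
    | zero => simp
    | succ n ih =>
      have hb : (0:ℝ) ≤ 1 + s / T := by positivity
      have hkn : (0:ℝ) ≤ (n : ℝ) * s := by positivity
      have := hstep ((n : ℝ) * s) s hkn hs
      calc F (↑(n+1) * s) * (1 + s / T) ^ (n+1)
          = (F ((n:ℝ) * s + s) * (1 + s / T)) * (1 + s / T) ^ n := by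
            push_cast; ring_nf
        _ ≤ F ((n:ℝ) * s) * (1 + s / T) ^ n :=
            mul_le_mul_of_nonneg_right this (pow_nonneg hb n)
        _ ≤ F 0 := ih
  have hdecay : ∀ s : ℝ, 0 ≤ s → F s ≤ F 0 * Real.exp (-(s / T)) := by
    intro s hs
    have hlim : Tendsto (fun n : ℕ => F 0 / (1 + (s / T) / n) ^ n) atTop
        (𝓝 (F 0 / Real.exp (s / T))) :=
      Tendsto.div tendsto_const_nhds (Real.tendsto_one_add_div_pow_exp (s / T))
        (Real.exp_ne_zero _)
    have hev : ∀ᶠ n : ℕ in atTop, F s ≤ F 0 / (1 + (s / T) / n) ^ n := by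
      filter_upwards [eventually_ge_atTop 1] with n hn
      have hn0 : (0:ℝ) < n := by exact_mod_cast hn
      have hh : (0:ℝ) ≤ s / n := by positivity
      have := hiter (s / n) hh n
      have heq : (n:ℝ) * (s / n) = s := by field_simp
      rw [heq] at this
      have heq2 : (s / n) / T = (s / T) / n := by ring
      rw [heq2] at this
      have hpos : (0:ℝ) < (1 + (s / T) / n) ^ n := by positivity
      rw [le_div_iff₀ hpos]
      exact this
    have := le_of_tendsto_of_tendsto (f := fun _ : ℕ => F s)
      tendsto_const_nhds hlim hev
    rwa [div_eq_mul_inv, ← Real.exp_neg] at this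
  intro t ht
  have ha : 0 ≤ t - T := by linarith
  have h1 := hchunk (t - T) t ha (by linarith)
  have h2 := hlow (t - T) t ha (by linarith)
  have h3 : t - (t - T) = T := by ring
  rw [h3] at h2
  have h4 : F t ≥ 0 := hFnonneg t (by linarith)
  have h5 : T * E t ≤ F (t - T) := by rw [h1] at *; linarith
  have h6 := hdecay (t - T) ha
  have h7 : F 0 ≤ T * E 0 := h 0 le_rfl
  have h8 : -((t - T) / T) = 1 - t / T := by field_simp; ring
  have h9 : T * E t ≤ T * E 0 * Real.exp (1 - t / T) := by
    rw [← h8]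
    calc T * E t ≤ F (t - T) := h5
      _ ≤ F 0 * Real.exp (-((t - T) / T)) := h6
      _ ≤ T * E 0 * Real.exp (-((t - T) / T)) :=
          mul_le_mul_of_nonneg_right h7 (Real.exp_nonneg _)
  have := (mul_le_mul_iff_right₀ hT).1 (by linarith [h9] : T * E t ≤ T * (E 0 * Real.exp (1 - t / T)))
  exact this
end

section
/- Let E : [0,∞) → [0,∞) be non-increasing and suppose there exist T > 0 such that ∫_t^∞ E(s) ds ≤ T·E(t) for all t ≥ 0. Then E(t) ≤ E(0)·e^{1 - t/T} for all t ≥ 0 (not just t ≥ T). -/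
open MeasureTheory Set Real Filter

theorem komornik_thm_8_1_all_t (E : ℝ → ℝ)
    (hE_nonneg : ∀ t ≥ 0, 0 ≤ E t)
    (hE_mono : ∀ s t : ℝ, 0 ≤ s → s ≤ t → E t ≤ E s)
    (hE_int : ∀ t ≥ 0, MeasureTheory.IntegrableOn E (Set.Ioi t))
    (T : ℝ) (hT : 0 < T)
    (h : ∀ t ≥ 0, (∫ s in Set.Ioi t, E s) ≤ T * E t) :
    ∀ t ≥ 0, E t ≤ E 0 * Real.exp (1 - t / T) := by
  set F : ℝ → ℝ := fun t => ∫ s in Set.Ioi t, E s with hFdef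
  have hFnonneg : ∀ t ≥ 0, 0 ≤ F t := fun t ht =>
    setIntegral_nonneg measurableSet_Ioi
      (fun x hx => hE_nonneg x (le_of_lt (lt_of_le_of_lt ht hx)))
  have hsplit : ∀ s t : ℝ, 0 ≤ s → s ≤ t →
      F s = (∫ u in Set.Ioc s t, E u) + F t := by
    intro s t hs hst
    have hu : Set.Ioc s t ∪ Set.Ioi t = Set.Ioi s := Set.Ioc_union_Ioi_eq_Ioi hst
    have h1 : MeasureTheory.IntegrableOn E (Set.Ioc s t) :=
      (hE_int s hs).mono_set (by rw [← hu]; exact Set.subset_union_left)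
    have h2 : MeasureTheory.IntegrableOn E (Set.Ioi t) :=
      (hE_int s hs).mono_set (by rw [← hu]; exact Set.subset_union_right)
    simp only [hFdef]
    rw [← hu, setIntegral_union (Set.Ioc_disjoint_Ioi le_rfl) measurableSet_Ioi h1 h2]
  have hmid : ∀ s t : ℝ, 0 ≤ s → s ≤ t →
      (t - s) * E t ≤ ∫ u in Set.Ioc s t, E u := by
    intro s t hs hst
    have hu : Set.Ioc s t ∪ Set.Ioi t = Set.Ioi s := Set.Ioc_union_Ioi_eq_Ioi hst
    have h1 : MeasureTheory.IntegrableOn E (Set.Ioc s t) :=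
      (hE_int s hs).mono_set (by rw [← hu]; exact Set.subset_union_left)
    have : (∫ _ in Set.Ioc s t, E t) ≤ ∫ u in Set.Ioc s t, E u := by
      apply setIntegral_mono_on (integrableOn_const (by simp)) h1
        measurableSet_Ioc
      intro x hx
      exact hE_mono x t (le_trans hs hx.1.le) hx.2
    rwa [setIntegral_const, Real.volume_real_Ioc_of_le hst,
      smul_eq_mul] at this
  -- the key functional inequality
  have hkey : ∀ s t : ℝ, 0 ≤ s → s ≤ t → F t * (1 + (t - s) / T) ≤ F s := by
    intro s t hs hst
    have ht0 : (0:ℝ) ≤ t := le_trans hs hst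
    have hEt : F t ≤ T * E t := h t ht0
    have hEt' : F t / T ≤ E t := (div_le_iff₀' hT).2 hEt
    have hm := hmid s t hs hst
    have hsp := hsplit s t hs hst
    have hmul : (t - s) * (F t / T) ≤ (t - s) * E t :=
      mul_le_mul_of_nonneg_left hEt' (by linarith)
    have : F t + (t - s) * (F t / T) ≤ F s := by linarith
    calc F t * (1 + (t - s) / T) = F t + (t - s) * (F t / T) := by ring
      _ ≤ F s := this
  -- iterate
  have hiter : ∀ t : ℝ, 0 ≤ t → ∀ n : ℕ, 1 ≤ n →
      F t * (1 + (t / T) / n) ^ n ≤ F 0 := by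
    intro t ht n hn
    set δ : ℝ := t / n with hδ
    have hδ0 : 0 ≤ δ := div_nonneg ht (Nat.cast_nonneg n)
    have hstep : ∀ k : ℕ, F ((k : ℝ) * δ) * (1 + δ / T) ^ k ≤ F 0 := by
      intro k
      induction k with
      | zero => simp
      | succ k ih =>
        have hk0 : (0:ℝ) ≤ (k : ℝ) * δ := mul_nonneg (Nat.cast_nonneg k) hδ0
        have hkey' := hkey ((k : ℝ) * δ) (((k : ℕ) + 1 : ℕ) * δ) hk0
          (by push_cast; nlinarith)
        have hd : (((k : ℕ) + 1 : ℕ) : ℝ) * δ - (k : ℝ) * δ = δ := by push_cast; ring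
        rw [hd] at hkey'
        have hpow : (0:ℝ) ≤ (1 + δ / T) ^ k :=
          pow_nonneg (by positivity) k
        calc F (((k : ℕ) + 1 : ℕ) * δ) * (1 + δ / T) ^ (k + 1)
            = (F (((k : ℕ) + 1 : ℕ) * δ) * (1 + δ / T)) * (1 + δ / T) ^ k := by ring
          _ ≤ F ((k : ℝ) * δ) * (1 + δ / T) ^ k := mul_le_mul_of_nonneg_right hkey' hpow
          _ ≤ F 0 := ih
    have := hstep n
    have hnδ : (n : ℝ) * δ = t := by
      rw [hδ]; field_simp
    rw [hnδ] at this
    have hq : δ / T = (t / T) / n := by rw [hδ]; ring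
    rwa [hq] at this
  -- limit: F t * exp (t/T) ≤ F 0
  have hexp : ∀ t : ℝ, 0 ≤ t → F t * Real.exp (t / T) ≤ F 0 := by
    intro t ht
    have hlim : Tendsto (fun n : ℕ => F t * (1 + (t / T) / n) ^ n) atTop
        (nhds (F t * Real.exp (t / T))) :=
      (Real.tendsto_one_add_div_pow_exp (t / T)).const_mul (F t)
    refine le_of_tendsto hlim ?_
    filter_upwards [eventually_ge_atTop 1] with n hn
    exact hiter t ht n hn
  -- conclude
  intro t ht
  rcases le_or_gt t T with hcase | hcase
  · have : E t ≤ E 0 := hE_mono 0 t le_rfl ht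
    have hexp1 : (1:ℝ) ≤ Real.exp (1 - t / T) := by
      rw [Real.one_le_exp_iff]
      have : t / T ≤ 1 := (div_le_one hT).2 hcase
      linarith
    nlinarith [hE_nonneg 0 le_rfl, hE_nonneg t ht]
  · -- t > T
    have hs0 : (0:ℝ) ≤ t - T := by linarith
    have hm := hmid (t - T) t hs0 (by linarith)
    have hsp := hsplit (t - T) t hs0 (by linarith)
    have hFt : 0 ≤ F t := hFnonneg t ht
    have hTE : T * E t ≤ F (t - T) := by
      have : t - (t - T) = T := by ring
      rw [this] at hm
      linarith
    have hFexp : F (t - T) * Real.exp ((t - T) / T) ≤ F 0 := hexp (t - T) hs0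
    have hF0 : F 0 ≤ T * E 0 := h 0 le_rfl
    have hepos : 0 < Real.exp ((t - T) / T) := Real.exp_pos _
    have h1 : T * E t ≤ F 0 / Real.exp ((t - T) / T) := by
      rw [le_div_iff₀ hepos]
      calc T * E t * Real.exp ((t - T) / T) ≤ F (t - T) * Real.exp ((t - T) / T) :=
            mul_le_mul_of_nonneg_right hTE hepos.le
        _ ≤ F 0 := hFexp
    have h2 : F 0 / Real.exp ((t - T) / T) ≤ T * E 0 / Real.exp ((t - T) / T) :=
      by gcongr
    have heq : Real.exp (1 - t / T) = 1 / Real.exp ((t - T) / T) := by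
      rw [one_div, ← Real.exp_neg]
      congr 1
      field_simp
      ring
    have : T * E t ≤ T * E 0 / Real.exp ((t - T) / T) := le_trans h1 h2
    rw [← mul_le_mul_iff_of_pos_left hT]
    calc T * E t ≤ T * E 0 / Real.exp ((t - T) / T) := this
      _ = T * (E 0 * Real.exp (1 - t / T)) := by rw [heq]; ring
end

section
/- Let E : [0,∞) → [0,∞) be non-increasing and suppose there exist constants α > 0 and T > 0 such that ∫_t^∞ E(s)^{α+1} ds ≤ T·E(0)^α·E(t) for all t ≥ 0. Then E(t) ≤ E(0)·((T + αT)/(T + αt))^{1/α} for all t ≥ T. -/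
set_option maxHeartbeats 1600000 in
theorem komornik_thm_9_1 (E : ℝ → ℝ)
    (hE_nonneg : ∀ t ≥ 0, 0 ≤ E t)
    (hE_mono : ∀ s t : ℝ, 0 ≤ s → s ≤ t → E t ≤ E s)
    (α T : ℝ) (hα : 0 < α) (hT : 0 < T)
    (hE_int : ∀ t ≥ 0, MeasureTheory.IntegrableOn (fun s => (E s) ^ (α + 1)) (Set.Ioi t))
    (h : ∀ t ≥ 0, (∫ s in Set.Ioi t, (E s) ^ (α + 1)) ≤ T * (E 0) ^ α * E t) :
    ∀ t ≥ T, E t ≤ E 0 * ((T + α * T) / (T + α * t)) ^ (1 / α) := by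
  classical
  obtain ⟨g, hg⟩ : ∃ g : ℝ → ℝ, g = fun s => E s ^ (α + 1) := ⟨_, rfl⟩
  obtain ⟨F, hFdef⟩ : ∃ F : ℝ → ℝ, F = fun u => ∫ s in Set.Ioi u, g s := ⟨_, rfl⟩
  have hα1 : (0:ℝ) < α + 1 := by linarith
  have hαne : α ≠ 0 := ne_of_gt hα
  have hg_nonneg : ∀ u, 0 ≤ u → 0 ≤ g u := by
    intro u hu; rw [hg]; exact Real.rpow_nonneg (hE_nonneg u hu) _
  have hgmono : ∀ u v : ℝ, 0 ≤ u → u ≤ v → g v ≤ g u := by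
    intro u v hu huv; rw [hg]
    exact Real.rpow_le_rpow (hE_nonneg v (hu.trans huv)) (hE_mono u v hu huv) hα1.le
  have hgIoi : ∀ u : ℝ, 0 ≤ u → MeasureTheory.IntegrableOn g (Set.Ioi u) := by
    intro u hu; rw [hg]; exact hE_int u hu
  have hgIoc : ∀ s t' : ℝ, 0 ≤ s → MeasureTheory.IntegrableOn g (Set.Ioc s t') := by
    intro s t' hs; exact (hgIoi s hs).mono_set Set.Ioc_subset_Ioi_self
  have hsplit : ∀ s t' : ℝ, 0 ≤ s → s ≤ t' →
      F s = (∫ u in Set.Ioc s t', g u) + F t' := by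
    intro s t' hs hst
    simp only [hFdef]
    rw [← Set.Ioc_union_Ioi_eq_Ioi hst,
      MeasureTheory.setIntegral_union Set.Ioc_disjoint_Ioi_same measurableSet_Ioi
        (hgIoc s t' hs) (hgIoi t' (hs.trans hst))]
  have hFnonneg : ∀ u, 0 ≤ u → 0 ≤ F u := by
    intro u hu
    simp only [hFdef]
    exact MeasureTheory.setIntegral_nonneg measurableSet_Ioi
      (fun x hx => hg_nonneg x (hu.trans (le_of_lt hx)))
  have hIocnonneg : ∀ s t' : ℝ, 0 ≤ s → 0 ≤ ∫ u in Set.Ioc s t', g u := by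
    intro s t' hs
    exact MeasureTheory.setIntegral_nonneg measurableSet_Ioc
      (fun x hx => hg_nonneg x (hs.trans hx.1.le))
  have hFmono : ∀ s t' : ℝ, 0 ≤ s → s ≤ t' → F t' ≤ F s := by
    intro s t' hs hst
    have h1 := hsplit s t' hs hst
    have h2 := hIocnonneg s t' hs
    linarith
  have hIocle : ∀ s t' : ℝ, 0 ≤ s → s ≤ t' →
      (∫ u in Set.Ioc s t', g u) ≤ (t' - s) * g 0 := by
    intro s t' hs hst
    have h1 : (∫ u in Set.Ioc s t', g u) ≤ ∫ _ in Set.Ioc s t', g 0 :=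
      MeasureTheory.setIntegral_mono_on (hgIoc s t' hs)
        (MeasureTheory.integrableOn_const measure_Ioc_lt_top.ne)
        measurableSet_Ioc (fun x hx => hgmono 0 x le_rfl (hs.trans hx.1.le))
    rw [MeasureTheory.setIntegral_const, Real.volume_real_Ioc_of_le (by linarith),
       smul_eq_mul] at h1
    exact h1
  have hFcont : ContinuousOn F (Set.Ici 0) := by
    have hFlip : LipschitzOnWith (Real.toNNReal (g 0)) F (Set.Ici 0) := by
      apply LipschitzOnWith.of_dist_le'
      intro x hx y hy
      rcases le_total y x with hxy | hxy
      · have h1 := hsplit y x hy hxy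
        have h2 := hIocle y x hy hxy
        have h3 := hIocnonneg y x hy
        rw [Real.dist_eq, Real.dist_eq, abs_of_nonpos (by linarith), abs_of_nonneg (by linarith)]
        linarith
      · have h1 := hsplit x y hx hxy
        have h2 := hIocle x y hx hxy
        have h3 := hIocnonneg x y hx
        rw [Real.dist_eq, Real.dist_eq, abs_of_nonneg (by linarith), abs_of_nonpos (by linarith)]
        linarith
    exact hFlip.continuousOn
  intro t ht
  have ht0 : 0 < t := lt_of_lt_of_le hT ht
  rcases (hFnonneg 0 le_rfl).eq_or_lt with hF0 | hF0
  · -- degenerate case: F 0 = 0, hence E t = 0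
    have hgt0 : t * g t ≤ ∫ u in Set.Ioc 0 t, g u := by
      have h1 : (∫ _ in Set.Ioc 0 t, g t) ≤ ∫ u in Set.Ioc 0 t, g u :=
        MeasureTheory.setIntegral_mono_on
          (MeasureTheory.integrableOn_const measure_Ioc_lt_top.ne)
          (hgIoc 0 t le_rfl) measurableSet_Ioc (fun x hx => hgmono x t hx.1.le hx.2)
      rw [MeasureTheory.setIntegral_const, Real.volume_real_Ioc_of_le (by linarith),
        smul_eq_mul, sub_zero] at h1
      exact h1
    have hle : (∫ u in Set.Ioc 0 t, g u) ≤ 0 := by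
      have h1 := hsplit 0 t le_rfl ht0.le
      have h2 := hFnonneg t ht0.le
      linarith
    have hEt : E t = 0 := by
      by_contra hne
      have hpos : 0 < E t := lt_of_le_of_ne (hE_nonneg t ht0.le) (Ne.symm hne)
      have hgpos : 0 < g t := by rw [hg]; exact Real.rpow_pos_of_pos hpos _
      nlinarith
    rw [hEt]
    have hbase : 0 ≤ (T + α * T) / (T + α * t) :=
      div_nonneg (by nlinarith) (by nlinarith)
    exact mul_nonneg (hE_nonneg 0 le_rfl) (Real.rpow_nonneg hbase _)
  · -- main case: F 0 > 0
    have hE0 : 0 < E 0 := by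
      rcases (hE_nonneg 0 le_rfl).eq_or_lt with h0 | h0
      · exfalso
        have h1 := h 0 le_rfl
        rw [← h0] at h1
        rw [Real.zero_rpow hαne] at h1
        simp only [mul_zero, zero_mul] at h1
        have h2 : F 0 ≤ 0 := by
          simpa only [hFdef, hg] using h1
        linarith
      · exact h0
    obtain ⟨c, hcdef⟩ : ∃ c : ℝ, c = T * E 0 ^ α := ⟨_, rfl⟩
    have hc : 0 < c := hcdef ▸ mul_pos hT (Real.rpow_pos_of_pos hE0 α)
    obtain ⟨k, hkdef⟩ : ∃ k : ℝ, k = (c ^ (α + 1))⁻¹ := ⟨_, rfl⟩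
    have hk : 0 < k := hkdef ▸ inv_pos.2 (Real.rpow_pos_of_pos hc _)
    have hEF : ∀ u, 0 ≤ u → F u ≤ c * E u := by
      intro u hu
      have h1 := h u hu
      rw [hcdef]
      simpa only [hFdef, hg] using h1
    have hpt : ∀ u, 0 ≤ u → k * F u ^ (α + 1) ≤ g u := by
      intro u hu
      have h1 : F u / c ≤ E u := by
        rw [div_le_iff₀ hc]
        have := hEF u hu
        linarith [mul_comm (E u) c]
      have h2 : (F u / c) ^ (α + 1) ≤ E u ^ (α + 1) :=
        Real.rpow_le_rpow (div_nonneg (hFnonneg u hu) hc.le) h1 hα1.le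
      rw [Real.div_rpow (hFnonneg u hu) hc.le] at h2
      have h3 : k * F u ^ (α + 1) = F u ^ (α + 1) / c ^ (α + 1) := by
        rw [hkdef]; ring
      rw [h3, hg]
      exact h2
    obtain ⟨A, hAdef⟩ : ∃ A : ℝ, A = F 0 ^ (-α) := ⟨_, rfl⟩
    have hA : 0 < A := hAdef ▸ Real.rpow_pos_of_pos hF0 _
    obtain ⟨ψ, hψdef⟩ : ∃ ψ : ℝ → ℝ, ψ = fun u => (A + α * k * u) ^ (-(1 / α)) := ⟨_, rfl⟩
    have hBpos : ∀ u : ℝ, 0 ≤ u → 0 < A + α * k * u := by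
      intro u hu
      have : 0 ≤ α * k * u := mul_nonneg (mul_nonneg hα.le hk.le) hu
      linarith
    have hψpos : ∀ u, 0 ≤ u → 0 < ψ u := by
      intro u hu; rw [hψdef]; exact Real.rpow_pos_of_pos (hBpos u hu) _
    have hψ0 : ψ 0 = F 0 := by
      rw [hψdef]
      simp only [mul_zero, add_zero]
      rw [hAdef, ← Real.rpow_mul hF0.le]
      rw [show -α * -(1 / α) = 1 by field_simp]
      exact Real.rpow_one _
    have hψcont : ContinuousOn ψ (Set.Ici 0) := by
      rw [hψdef]
      exact ContinuousOn.rpow_const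
        ((continuous_const.add (continuous_const.mul continuous_id)).continuousOn)
        (fun x hx => Or.inl (ne_of_gt (hBpos x hx)))
    have hψderiv : ∀ u ∈ Set.Ici (0:ℝ), HasDerivAt ψ (-(k * ψ u ^ (α + 1))) u := by
      intro u hu
      have hB := hBpos u hu
      have h1 : HasDerivAt (fun x : ℝ => A + α * k * x) (α * k) u := by
        simpa using ((hasDerivAt_id u).const_mul (α * k)).const_add A
      have h2 := h1.rpow_const (p := -(1 / α)) (Or.inl (ne_of_gt hB))
      rw [hψdef]
      convert h2 using 1
      simp only [hψdef]
      rw [← Real.rpow_mul hB.le, show -(1 / α) * (α + 1) = -(1 / α) - 1 by field_simp; ring]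
      field_simp
    have hψint : ∀ s u : ℝ, 0 ≤ s →
        MeasureTheory.IntegrableOn (fun x => ψ x ^ (α + 1)) (Set.Ioc s u) := by
      intro s u hs
      rcases le_or_gt s u with hsu | hsu
      · have hc1 : ContinuousOn (fun x => ψ x ^ (α + 1)) (Set.Icc s u) :=
          (hψcont.mono (fun x hx => hs.trans hx.1)).rpow_const (fun x _ => Or.inr hα1.le)
        exact hc1.integrableOn_Icc.mono_set Set.Ioc_subset_Icc_self
      · rw [Set.Ioc_eq_empty (by exact not_lt.2 hsu.le)]
        exact MeasureTheory.integrableOn_empty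
    have hFint : ∀ s u : ℝ, 0 ≤ s →
        MeasureTheory.IntegrableOn (fun x => F x ^ (α + 1)) (Set.Ioc s u) := by
      intro s u hs
      rcases le_or_gt s u with hsu | hsu
      · have hc1 : ContinuousOn (fun x => F x ^ (α + 1)) (Set.Icc s u) :=
          (hFcont.mono (fun x hx => hs.trans hx.1)).rpow_const (fun x _ => Or.inr hα1.le)
        exact hc1.integrableOn_Icc.mono_set Set.Ioc_subset_Icc_self
      · rw [Set.Ioc_eq_empty (by exact not_lt.2 hsu.le)]
        exact MeasureTheory.integrableOn_empty
    have hψFTC : ∀ s u : ℝ, 0 ≤ s → s ≤ u →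
        ψ u = ψ s - k * ∫ x in Set.Ioc s u, ψ x ^ (α + 1) := by
      intro s u hs hsu
      have hsub : Set.uIcc s u ⊆ Set.Ici (0:ℝ) := by
        rw [Set.uIcc_of_le hsu]
        exact fun x hx => hs.trans hx.1
      have hcint : ContinuousOn (fun x => -(k * ψ x ^ (α + 1))) (Set.uIcc s u) := by
        exact ((continuousOn_const.mul ((hψcont.mono hsub).rpow_const
          (fun x _ => Or.inr hα1.le)))).neg
      have hFTC := intervalIntegral.integral_eq_sub_of_hasDerivAt
        (f := ψ) (f' := fun x => -(k * ψ x ^ (α + 1)))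
        (fun x hx => hψderiv x (hsub hx)) hcint.intervalIntegrable
      have heq : (∫ x in s..u, -(k * ψ x ^ (α + 1))) =
          -(k * ∫ x in Set.Ioc s u, ψ x ^ (α + 1)) := by
        rw [intervalIntegral.integral_neg, intervalIntegral.integral_const_mul,
          intervalIntegral.integral_of_le hsu]
      rw [heq] at hFTC
      linarith
    have hcomp : ∀ u, 0 ≤ u → F u ≤ ψ u := by
      intro u hu
      by_contra hlt
      push_neg at hlt
      obtain ⟨S, hSdef⟩ : ∃ S : Set ℝ, S = {x | x ∈ Set.Icc 0 u ∧ F x ≤ ψ x} := ⟨_, rfl⟩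
      have hSne : S.Nonempty := ⟨0, by rw [hSdef]; exact ⟨⟨le_rfl, hu⟩, by rw [hψ0]⟩⟩
      have hSsub : S ⊆ Set.Icc 0 u := by rw [hSdef]; exact fun x hx => hx.1
      have hSclosed : IsClosed S := by
        have hcont : ContinuousOn (fun x => F x - ψ x) (Set.Icc 0 u) :=
          (hFcont.mono (fun x hx => hx.1)).sub (hψcont.mono fun x hx => hx.1)
        have hSeq : S = Set.Icc 0 u ∩ (fun x => F x - ψ x) ⁻¹' Set.Iic 0 := by
          rw [hSdef]; ext x
          simp [sub_nonpos]
        rw [hSeq]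
        exact hcont.preimage_isClosed_of_isClosed isClosed_Icc isClosed_Iic
      have hScompact : IsCompact S := isCompact_Icc.of_isClosed_subset hSclosed hSsub
      obtain ⟨t₁, ht₁def⟩ : ∃ t₁ : ℝ, t₁ = sSup S := ⟨_, rfl⟩
      have ht₁S : t₁ ∈ S := ht₁def ▸ hScompact.sSup_mem hSne
      have ht₁0 : 0 ≤ t₁ := (hSsub ht₁S).1
      have ht₁u : t₁ ≤ u := (hSsub ht₁S).2
      have ht₁F : F t₁ ≤ ψ t₁ := by rw [hSdef] at ht₁S; exact ht₁S.2
      have hgt : ∀ x, x ∈ Set.Ioc t₁ u → ψ x < F x := by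
        intro x hx
        by_contra hle
        push_neg at hle
        have hxS : x ∈ S := by
          rw [hSdef]; exact ⟨⟨ht₁0.trans hx.1.le, hx.2⟩, hle⟩
        have hxle : x ≤ t₁ := ht₁def ▸ le_csSup hScompact.bddAbove hxS
        exact absurd hxle (not_le.2 hx.1)
      have hI1 : k * ∫ x in Set.Ioc t₁ u, F x ^ (α + 1) ≤ ∫ x in Set.Ioc t₁ u, g x := by
        rw [← MeasureTheory.integral_const_mul]
        exact MeasureTheory.setIntegral_mono_on ((hFint t₁ u ht₁0).const_mul k)
          (hgIoc t₁ u ht₁0) measurableSet_Ioc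
          (fun x hx => hpt x (ht₁0.trans hx.1.le))
      have hI2 : (∫ x in Set.Ioc t₁ u, ψ x ^ (α + 1)) ≤ ∫ x in Set.Ioc t₁ u, F x ^ (α + 1) :=
        MeasureTheory.setIntegral_mono_on (hψint t₁ u ht₁0) (hFint t₁ u ht₁0)
          measurableSet_Ioc
          (fun x hx => Real.rpow_le_rpow (hψpos x (ht₁0.trans hx.1.le)).le
            (hgt x hx).le hα1.le)
      have hsplit1 := hsplit t₁ u ht₁0 ht₁u
      have hFTC1 := hψFTC t₁ u ht₁0 ht₁u
      have hkI : k * (∫ x in Set.Ioc t₁ u, ψ x ^ (α + 1)) ≤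
          k * ∫ x in Set.Ioc t₁ u, F x ^ (α + 1) :=
        mul_le_mul_of_nonneg_left hI2 hk.le
      linarith
    -- final computation
    obtain ⟨h0, hh0def⟩ : ∃ h0 : ℝ, h0 = (T + α * t) / (1 + α) := ⟨_, rfl⟩
    have h1α : (0:ℝ) < 1 + α := by linarith
    have hTt : 0 < T + α * t := by nlinarith
    have hh0pos : 0 < h0 := hh0def ▸ div_pos hTt h1α
    obtain ⟨s, hsdef⟩ : ∃ s : ℝ, s = t - h0 := ⟨_, rfl⟩
    have hs0 : 0 ≤ s := by
      rw [hsdef, hh0def, sub_nonneg, div_le_iff₀ h1α]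
      nlinarith
    have hst : s ≤ t := by rw [hsdef]; linarith
    have hTs : T + α * s = h0 := by
      rw [hsdef, hh0def]
      field_simp
      ring
    have hlow : h0 * g t ≤ ∫ u in Set.Ioc s t, g u := by
      have h1 : (∫ _ in Set.Ioc s t, g t) ≤ ∫ u in Set.Ioc s t, g u :=
        MeasureTheory.setIntegral_mono_on
          (MeasureTheory.integrableOn_const measure_Ioc_lt_top.ne)
          (hgIoc s t hs0) measurableSet_Ioc
          (fun x hx => hgmono x t (hs0.trans hx.1.le) hx.2)
      rw [MeasureTheory.setIntegral_const, Real.volume_real_Ioc_of_le (by linarith),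
        smul_eq_mul] at h1
      have hts : t - s = h0 := by rw [hsdef]; ring
      rwa [hts] at h1
    have hup : (∫ u in Set.Ioc s t, g u) ≤ F s := by
      have h1 := hsplit s t hs0 hst
      have h2 := hFnonneg t ht0.le
      linarith
    have hψs := hcomp s hs0
    obtain ⟨D, hDdef⟩ : ∃ D : ℝ, D = T ^ (-(α + 1)) * E 0 ^ (-(α * (α + 1))) := ⟨_, rfl⟩
    have hD : 0 < D :=
      hDdef ▸ mul_pos (Real.rpow_pos_of_pos hT _) (Real.rpow_pos_of_pos hE0 _)
    have hkD : k = D := by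
      rw [hkdef, ← Real.rpow_neg hc.le, hcdef,
        Real.mul_rpow hT.le (Real.rpow_nonneg hE0.le α), ← Real.rpow_mul hE0.le, hDdef,
        show α * -(α + 1) = -(α * (α + 1)) by ring]
    have hF0le : F 0 ≤ T * E 0 ^ (α + 1) := by
      have h1 := hEF 0 le_rfl
      rw [hcdef] at h1
      rw [Real.rpow_add_one (ne_of_gt hE0) α]
      linarith [mul_assoc T (E 0 ^ α) (E 0)]
    have hA_ge : D * T ≤ A := by
      have h1 : (T * E 0 ^ (α + 1)) ^ (-α) ≤ A := by
        rw [hAdef]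
        exact Real.rpow_le_rpow_of_nonpos hF0 hF0le (by linarith)
      have h2 : (T * E 0 ^ (α + 1)) ^ (-α) = D * T := by
        rw [Real.mul_rpow hT.le (Real.rpow_nonneg hE0.le _), ← Real.rpow_mul hE0.le,
          show (α + 1) * -α = -(α * (α + 1)) by ring, hDdef,
          show -α = -(α + 1) + 1 by ring, Real.rpow_add_one (ne_of_gt hT)]
        ring
      linarith [h2 ▸ h1]
    have hBs : D * h0 ≤ A + α * k * s := by
      rw [← hTs, hkD]
      nlinarith [hA_ge, hD.le, hs0]
    have hψs_le : ψ s ≤ (D * h0) ^ (-(1 / α)) := by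
      rw [hψdef]
      exact Real.rpow_le_rpow_of_nonpos (mul_pos hD hh0pos) hBs
        (neg_nonpos.2 (by positivity))
    have hmain : h0 * E t ^ (α + 1) ≤ (D * h0) ^ (-(1 / α)) := by
      have hgt' : g t = E t ^ (α + 1) := by rw [hg]
      nlinarith [hlow, hup, hψs, hψs_le, hgt' ▸ hlow]
    have hgoal_eq : (T + α * T) / (T + α * t) = T / h0 := by
      rw [hh0def]
      field_simp
    rw [hgoal_eq]
    rcases (hE_nonneg t ht0.le).eq_or_lt with hEt0 | hEt0
    · rw [← hEt0]
      exact mul_nonneg hE0.le (Real.rpow_nonneg (div_nonneg hT.le hh0pos.le) _)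
    · have hTh0 : 0 < T / h0 := div_pos hT hh0pos
      have hRHS : 0 < E 0 * (T / h0) ^ (1 / α) :=
        mul_pos hE0 (Real.rpow_pos_of_pos hTh0 _)
      rw [← Real.log_le_log_iff hEt0 hRHS, Real.log_mul (ne_of_gt hE0)
        (ne_of_gt (Real.rpow_pos_of_pos hTh0 _)), Real.log_rpow hTh0,
        Real.log_div (ne_of_gt hT) (ne_of_gt hh0pos)]
      have hlhs_pos : 0 < h0 * E t ^ (α + 1) :=
        mul_pos hh0pos (Real.rpow_pos_of_pos hEt0 _)
      have hlog1 : Real.log (h0 * E t ^ (α + 1)) ≤ Real.log ((D * h0) ^ (-(1 / α))) :=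
        (Real.log_le_log_iff hlhs_pos (Real.rpow_pos_of_pos (mul_pos hD hh0pos) _)).2 hmain
      rw [Real.log_mul (ne_of_gt hh0pos) (ne_of_gt (Real.rpow_pos_of_pos hEt0 _)),
        Real.log_rpow hEt0, Real.log_rpow (mul_pos hD hh0pos),
        Real.log_mul (ne_of_gt hD) (ne_of_gt hh0pos)] at hlog1
      have hlogD : Real.log D = -(α + 1) * Real.log T + -(α * (α + 1)) * Real.log (E 0) := by
        rw [hDdef, Real.log_mul (ne_of_gt (Real.rpow_pos_of_pos hT _))
          (ne_of_gt (Real.rpow_pos_of_pos hE0 _)), Real.log_rpow hT, Real.log_rpow hE0]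
      rw [hlogD] at hlog1
      set L := Real.log (E t) with hL
      set B := Real.log (E 0) with hB
      set C := Real.log T with hC
      set Dl := Real.log h0 with hDl
      -- hlog1 : Dl + (α+1)*L ≤ -(1/α) * (-(α+1)*C + -(α*(α+1))*B + Dl)
      -- goal : L ≤ B + 1/α * (C - Dl)
      have H2 : α * (Dl + (α + 1) * L) ≤
          α * (-(1 / α) * (-(α + 1) * C + -(α * (α + 1)) * B + Dl)) :=
        mul_le_mul_of_nonneg_left hlog1 hα.le
      have e1 : α * (-(1 / α) * (-(α + 1) * C + -(α * (α + 1)) * B + Dl)) =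
          (α + 1) * C + α * (α + 1) * B - Dl := by
        field_simp
        ring
      rw [e1] at H2
      have H3' : (α + 1) * (α * L) ≤ (α + 1) * (α * B + (C - Dl)) := by linarith [H2]
      have H3 : α * L ≤ α * B + (C - Dl) := le_of_mul_le_mul_left H3' hα1
      have e3 : α * (B + 1 / α * (C - Dl)) = α * B + (C - Dl) := by
        field_simp
      have H4 : α * L ≤ α * (B + 1 / α * (C - Dl)) := by rw [e3]; exact H3
      exact le_of_mul_le_mul_left H4 hα
end

section
/- Let E : [0,∞) → [0,∞) be non-increasing with ∫_t^∞ E(s) ds ≤ T·E(t) for all t ≥ 0, where T > 0. Then the function G(t) = ∫_t^∞ E(s) ds satisfies G(t) ≤ G(0)·e^{-t/T} for all t ≥ 0. -/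
open MeasureTheory Set Filter Real Topology

theorem tail_integral_exponential_decay (E : ℝ → ℝ)
    (hE_nonneg : ∀ t ≥ (0 : ℝ), 0 ≤ E t)
    (hE_mono : ∀ s t : ℝ, 0 ≤ s → s ≤ t → E t ≤ E s)
    (hE_int : MeasureTheory.IntegrableOn E (Set.Ici 0))
    (T : ℝ) (hT : 0 < T)
    (h : ∀ t ≥ (0 : ℝ), (∫ s in Set.Ioi t, E s) ≤ T * E t) :
    ∀ t ≥ (0 : ℝ),
      (∫ s in Set.Ioi t, E s) ≤ (∫ s in Set.Ioi (0:ℝ), E s) * Real.exp (-t / T) := by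
  set G : ℝ → ℝ := fun t => ∫ s in Set.Ioi t, E s with hG
  have hGint : ∀ t : ℝ, 0 ≤ t → MeasureTheory.IntegrableOn E (Set.Ioi t) := by
    intro t ht
    exact hE_int.mono_set (fun x hx => le_trans ht (le_of_lt hx))
  have hGnonneg : ∀ t : ℝ, 0 ≤ t → 0 ≤ G t := by
    intro t ht
    apply MeasureTheory.setIntegral_nonneg measurableSet_Ioi
    intro x hx
    exact hE_nonneg x (le_trans ht (le_of_lt hx))
  -- one step inequality
  have step : ∀ s : ℝ, 0 ≤ s → ∀ k : ℝ, 0 ≤ k → G (s + k) * (1 + k / T) ≤ G s := by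
    intro s hs k hk
    have hsk : 0 ≤ s + k := by linarith
    have hsplit : G s = (∫ x in Set.Ioc s (s + k), E x) + G (s + k) := by
      rw [hG]
      rw [← MeasureTheory.setIntegral_union]
      · rw [Set.Ioc_union_Ioi_eq_Ioi (by linarith)]
      · rw [Set.disjoint_iff]; rintro x ⟨hx1, hx2⟩; exact absurd hx2.out (not_lt.2 hx1.2)
      · exact measurableSet_Ioi
      · exact (hGint s hs).mono_set Set.Ioc_subset_Ioi_self
      · exact hGint (s + k) hsk
    have hlow : k * E (s + k) ≤ ∫ x in Set.Ioc s (s + k), E x := by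
      have := MeasureTheory.setIntegral_ge_of_const_le (μ := volume)
        (c := E (s + k)) (s := Set.Ioc s (s + k)) measurableSet_Ioc
        (by simp) (fun x hx => hE_mono x (s + k) (le_trans hs (le_of_lt hx.1)) hx.2)
        ((hGint s hs).mono_set Set.Ioc_subset_Ioi_self)
      rw [measureReal_def, smul_eq_mul, mul_comm, Real.volume_Ioc] at this
      rcases le_or_gt k 0 with hk0 | hk0
      · have hk0' : k = 0 := le_antisymm hk0 hk
        subst hk0'
        simp
      · rw [ENNReal.toReal_ofReal (by linarith : (0:ℝ) ≤ s + k - s)] at this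
        calc k * E (s + k) = E (s + k) * (s + k - s) := by ring
        _ ≤ _ := this
    have hTE : G (s + k) ≤ T * E (s + k) := h (s + k) hsk
    have hE' : G (s + k) / T ≤ E (s + k) := by
      rw [div_le_iff₀ hT]; linarith [hTE]
    have : k * (G (s + k) / T) ≤ k * E (s + k) := by
      exact mul_le_mul_of_nonneg_left hE' hk
    have : G s ≥ k * (G (s + k) / T) + G (s + k) := by
      rw [hsplit]; linarith [hlow]
    calc G (s + k) * (1 + k / T) = k * (G (s + k) / T) + G (s + k) := by ring
    _ ≤ G s := this
  -- iterate
  have iter : ∀ n : ℕ, ∀ k : ℝ, 0 ≤ k →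
      G (n * k) * (1 + k / T) ^ n ≤ G 0 := by
    intro n
    induction n with
    | zero => intro k hk; simp
    | succ m ih =>
      intro k hk
      have hmk : (0:ℝ) ≤ m * k := by positivity
      have h1 : G ((m : ℝ) * k + k) * (1 + k / T) ≤ G (m * k) := step (m * k) hmk k hk
      have hpow : (0:ℝ) ≤ (1 + k / T) ^ m := by positivity
      calc G ((m + 1 : ℕ) * k) * (1 + k / T) ^ (m + 1)
          = (G ((m : ℝ) * k + k) * (1 + k / T)) * (1 + k / T) ^ m := by
            push_cast; ring_nf
      _ ≤ G (m * k) * (1 + k / T) ^ m := mul_le_mul_of_nonneg_right h1 hpow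
      _ ≤ G 0 := ih k hk
  intro t ht
  -- for each n ≥ 1, G t ≤ G 0 / (1 + t/(n T))^n
  have key : ∀ n : ℕ, 0 < n → G t * (1 + t / n / T) ^ n ≤ G 0 := by
    intro n hn
    have hk : (0:ℝ) ≤ t / n := by positivity
    have := iter n (t / n) hk
    have hnt : (n : ℝ) * (t / n) = t := by
      field_simp
    rwa [hnt] at this
  -- take limit
  have htend : Tendsto (fun n : ℕ => G 0 / (1 + (t / T) / n) ^ n) atTop
      (𝓝 (G 0 * Real.exp (-t / T))) := by
    have h1 : Tendsto (fun n : ℕ => ((1 : ℝ) + (t / T) / n) ^ n) atTop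
        (𝓝 (Real.exp (t / T))) := Real.tendsto_one_add_div_pow_exp (t / T)
    have h2 : Tendsto (fun n : ℕ => G 0 / (1 + (t / T) / n) ^ n) atTop
        (𝓝 (G 0 / Real.exp (t / T))) :=
      tendsto_const_nhds.div h1 (Real.exp_ne_zero _)
    have : G 0 / Real.exp (t / T) = G 0 * Real.exp (-t / T) := by
      rw [div_eq_mul_inv, ← Real.exp_neg]; ring_nf
    rwa [this] at h2
  have hle : ∀ᶠ n : ℕ in atTop, G t ≤ G 0 / (1 + (t / T) / n) ^ n := by
    filter_upwards [eventually_gt_atTop 0] with n hn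
    have hkey := key n hn
    have heq : t / n / T = (t / T) / n := by ring
    rw [heq] at hkey
    have hpos : (0:ℝ) < (1 + (t / T) / n) ^ n := by
      have : (0:ℝ) < 1 + (t / T) / n := by positivity
      positivity
    rw [le_div_iff₀ hpos]
    exact hkey
  exact ge_of_tendsto htend hle
end
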